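/- Let Δ ≥ 2 and let G be a connected infinite Δ-regular graph that contains a subgraph isomorphic to RT_Δ. Then the epidemic region of G equals that of the infinite Δ-regular tree: Ω_G = Ω_{T_Δ}. -/

import Mathlib

namespace Contagion

open scoped BigOperators

/-- The three strategies in the contagion game. -/
inductive Strat
  | A | B | AB
deriving DecidableEq

/-- Pairwise payoff to a player using the first strategy against a neighbor
using the second strategy, in the contagion game with parameters `q, r`. -/
noncomputable def pairPayoff (q r : ℝ) : Strat → Strat → ℝ
  | .A, .A => 1 - q
  | .A, .B => 0
  | .A, .AB => 1 - q
  | .B, .A => 0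
  | .B, .B => q
  | .B, .AB => q
  | .AB, .A => 1 - q - r
  | .AB, .B => q - r
  | .AB, .AB => max q (1 - q) - r

variable {V : Type*}

/-- Total payoff to vertex `v` for playing strategy `s` against profile `σ`. -/
noncomputable def totalPayoff (G : SimpleGraph V) (q r : ℝ) (σ : V → Strat)
    (v : V) (s : Strat) : ℝ :=
  ∑ᶠ u ∈ G.neighborSet v, pairPayoff q r s (σ u)

/-- `s` is a best response of vertex `v` to the profile `σ`. -/
def IsBestResponse (G : SimpleGraph V) (q r : ℝ) (σ : V → Strat) (v : V) (s : Strat) : Prop :=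
  ∀ s' : Strat, totalPayoff G q r σ v s' ≤ totalPayoff G q r σ v s

/-- Strategy `A` becomes epidemic in the contagion game `(G, q, r)`:
there are a finite initial set `S₀` (playing `A`, everybody else playing `B`) and a
sequence `α` of vertices in which every vertex appears at least once, such that updating
at step `n` the vertex `α n` to a best response makes every vertex eventually adopt `A`. -/
def Epidemic (G : SimpleGraph V) (q r : ℝ) : Prop :=
  ∃ (S₀ : Set V) (α : ℕ → V) (σ : ℕ → V → Strat),
    S₀.Finite ∧
    Function.Surjective α ∧
    (∀ v ∈ S₀, σ 0 v = Strat.A) ∧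
    (∀ v ∉ S₀, σ 0 v = Strat.B) ∧
    (∀ n, IsBestResponse G q r (σ n) (α n) (σ (n + 1) (α n))) ∧
    (∀ n v, v ≠ α n → σ (n + 1) v = σ n v) ∧
    (∀ v, ∃ n, σ n v = Strat.A)

/-- The epidemic region `Ω_G ⊆ ℝ²` of `G`. -/
def epidemicRegion (G : SimpleGraph V) : Set (ℝ × ℝ) :=
  {p | 0 < p.1 ∧ p.1 < 1 ∧ 0 < p.2 ∧ Epidemic G p.1 p.2}

/-- `G` is `Δ`-regular: every vertex has exactly `Δ` neighbors. -/
def IsRegular (G : SimpleGraph V) (Δ : ℕ) : Prop :=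
  ∀ v, (G.neighborSet v).ncard = Δ

/-- The number of neighbors of `v` lying in the set `S`. -/
noncomputable def degIn (G : SimpleGraph V) (v : V) (S : Set V) : ℕ :=
  (G.neighborSet v ∩ S).ncard

/-- `RT Δ`: the infinite rooted tree in which the root (the empty list) has `Δ - 1`
children and every other vertex also has `Δ - 1` children (hence degree `Δ`). -/
def RT (Δ : ℕ) : SimpleGraph (List (Fin (Δ - 1))) :=
  SimpleGraph.fromRel (fun l l' => ∃ a : Fin (Δ - 1), l' = a :: l)

/-- `G` contains a subgraph isomorphic to `RT Δ`. -/
def HasRTCopy (Δ : ℕ) (G : SimpleGraph V) : Prop :=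
  ∃ f : List (Fin (Δ - 1)) → V,
    Function.Injective f ∧ ∀ x y, (RT Δ).Adj x y → G.Adj (f x) (f y)

/-- The thick half line `HL_Δ` (for even `Δ`), columns indexed by `ℕ` starting with the
first column `0`; `(k, i)` and `(l, j)` are adjacent exactly when `|k - l| = 1`. -/
def HL (Δ : ℕ) : SimpleGraph (ℕ × Fin (Δ / 2)) :=
  SimpleGraph.fromRel (fun x y => y.1 = x.1 + 1)

/-- The epidemic region of the infinite `Δ`-regular tree:
`{(q,r) : q,r > 0, r ≥ ((Δ-1)/Δ)q, q ≤ 1/Δ} ∪ {(q,r) : q,r > 0, 2q + Δr ≤ 1}`. -/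
def treeRegion (Δ : ℕ) : Set (ℝ × ℝ) :=
  {p | 0 < p.1 ∧ 0 < p.2 ∧ ((Δ : ℝ) - 1) / Δ * p.1 ≤ p.2 ∧ p.1 ≤ 1 / Δ} ∪
  {p | 0 < p.1 ∧ 0 < p.2 ∧ 2 * p.1 + Δ * p.2 ≤ 1}

/-- The epidemic region of the thick line `L_Δ`:
`{(q,r) : 0 < q ≤ 1/2, r ≥ q/2} ∪ {(q,r) : q,r > 0, r ≤ q/2, 2q + 2r ≤ 1}`. -/
def thickLineRegion : Set (ℝ × ℝ) :=
  {p | 0 < p.1 ∧ p.1 ≤ 1 / 2 ∧ p.1 / 2 ≤ p.2} ∪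
  {p | 0 < p.1 ∧ 0 < p.2 ∧ p.2 ≤ p.1 / 2 ∧ 2 * p.1 + 2 * p.2 ≤ 1}

/-- `(SAB, SB)` is a blocking structure for the contagion game `(G, q, r)`
on a `Δ`-regular graph `G`. -/
def IsBlockingStructure (G : SimpleGraph V) (Δ : ℕ) (q r : ℝ) (SAB SB : Set V) : Prop :=
  Disjoint SAB SB ∧ (SAB.Nonempty ∨ SB.Nonempty) ∧
  (∀ v ∈ SAB, r / q * Δ < (degIn G v SB : ℝ)) ∧
  ∀ v ∈ SB,
    (1 - q - r) * Δ < (1 - q) * (degIn G v SB : ℝ) + min q (1 - q) * (degIn G v SAB : ℝ) ∧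
    (1 - q) * Δ < (degIn G v SB : ℝ) + q * (degIn G v SAB : ℝ)

/-- The two strategies of the `A`-`B` coordination game. -/
inductive CStrat
  | A | B
deriving DecidableEq

/-- Pairwise payoff in the `A`-`B` coordination game `(G, q)`. -/
noncomputable def cPairPayoff (q : ℝ) : CStrat → CStrat → ℝ
  | .A, .A => 1 - q
  | .A, .B => 0
  | .B, .A => 0
  | .B, .B => q

/-- Total payoff to `v` for playing `s` against profile `σ` in the coordination game. -/
noncomputable def cTotalPayoff (G : SimpleGraph V) (q : ℝ) (σ : V → CStrat)
    (v : V) (s : CStrat) : ℝ :=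
  ∑ᶠ u ∈ G.neighborSet v, cPairPayoff q s (σ u)

/-- `s` is a best response of `v` to `σ` in the coordination game. -/
def CIsBestResponse (G : SimpleGraph V) (q : ℝ) (σ : V → CStrat) (v : V) (s : CStrat) : Prop :=
  ∀ s' : CStrat, cTotalPayoff G q σ v s' ≤ cTotalPayoff G q σ v s

/-- Strategy `A` becomes epidemic in the coordination game `(G, q)` starting from the
initial set `S₀`. -/
def CoordEpidemicFrom (G : SimpleGraph V) (q : ℝ) (S₀ : Set V) : Prop :=
  ∃ (α : ℕ → V) (σ : ℕ → V → CStrat),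
    Function.Surjective α ∧
    (∀ v ∈ S₀, σ 0 v = CStrat.A) ∧
    (∀ v ∉ S₀, σ 0 v = CStrat.B) ∧
    (∀ n, CIsBestResponse G q (σ n) (α n) (σ (n + 1) (α n))) ∧
    (∀ n v, v ≠ α n → σ (n + 1) v = σ n v) ∧
    (∀ v, ∃ n, σ n v = CStrat.A)

/-- Strategy `A` becomes epidemic in the coordination game `(G, q)`. -/
def CoordEpidemic (G : SimpleGraph V) (q : ℝ) : Prop :=
  ∃ S₀ : Set V, S₀.Finite ∧ CoordEpidemicFrom G q S₀

section Aux
open Classical in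
lemma exists_best (f : Strat → ℝ) : ∃ s, ∀ t, f t ≤ f s := by
  rcases le_total (f .A) (f .B) with h1 | h1
  · rcases le_total (f .B) (f .AB) with h2 | h2
    · exact ⟨.AB, fun t => by cases t <;> linarith⟩
    · exact ⟨.B, fun t => by cases t <;> linarith⟩
  · rcases le_total (f .A) (f .AB) with h2 | h2
    · exact ⟨.AB, fun t => by cases t <;> linarith⟩
    · exact ⟨.A, fun t => by cases t <;> linarith⟩

variable {V : Type*}

lemma nbr_finite {G : SimpleGraph V} {Δ : ℕ} (hreg : IsRegular G Δ) (hΔ : 2 ≤ Δ) (v : V) :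
    (G.neighborSet v).Finite := by
  by_contra h
  have h2 := Set.Infinite.ncard h
  have h3 := hreg v
  omega

/-- number of neighbors of `v` playing `t`. -/
noncomputable def cnt (G : SimpleGraph V) (σ : V → Strat) (v : V) (t : Strat) : ℕ :=
  (G.neighborSet v ∩ {u | σ u = t}).ncard

lemma cnt_eq_card {G : SimpleGraph V} {Δ : ℕ} (hreg : IsRegular G Δ) (hΔ : 2 ≤ Δ)
    (σ : V → Strat) (v : V) (t : Strat) :
    cnt G σ v t = ((nbr_finite hreg hΔ v).toFinset.filter (fun u => σ u = t)).card := by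
  classical
  rw [cnt, ← Set.ncard_coe_finset]
  congr 1
  ext u
  simp [Set.Finite.mem_toFinset]

lemma sum_strat (N : Finset V) (σ : V → Strat) (g : Strat → ℝ) :
    ∑ u ∈ N, g (σ u) =
      (N.filter (fun u => σ u = .A)).card * g .A +
      (N.filter (fun u => σ u = .B)).card * g .B +
      (N.filter (fun u => σ u = .AB)).card * g .AB := by
  classical
  rw [← Finset.sum_filter_add_sum_filter_not N (fun u => σ u = Strat.A)]
  rw [← Finset.sum_filter_add_sum_filter_not (N.filter (fun u => ¬ σ u = Strat.A))
    (fun u => σ u = Strat.B)]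
  have e1 : ∑ u ∈ N.filter (fun u => σ u = Strat.A), g (σ u) =
      (N.filter (fun u => σ u = .A)).card * g .A := by
    rw [Finset.sum_congr rfl (fun u hu => by
      rw [(Finset.mem_filter.1 hu).2])]
    rw [Finset.sum_const, nsmul_eq_mul]
  have hcongr2 : (N.filter (fun u => ¬ σ u = Strat.A)).filter (fun u => σ u = Strat.B)
      = N.filter (fun u => σ u = .B) := by
    rw [Finset.filter_filter]
    apply Finset.filter_congr
    intro u _
    cases h : σ u <;> simp [h]
  have e2 : ∑ u ∈ (N.filter (fun u => ¬ σ u = Strat.A)).filter (fun u => σ u = Strat.B),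
      g (σ u) = (N.filter (fun u => σ u = .B)).card * g .B := by
    rw [hcongr2, Finset.sum_congr rfl (fun u hu => by
      rw [(Finset.mem_filter.1 hu).2])]
    rw [Finset.sum_const, nsmul_eq_mul]
  have e3 : ∑ u ∈ (N.filter (fun u => ¬ σ u = Strat.A)).filter (fun u => ¬ σ u = Strat.B),
      g (σ u) = (N.filter (fun u => σ u = .AB)).card * g .AB := by
    have hcongr : (N.filter (fun u => ¬ σ u = Strat.A)).filter (fun u => ¬ σ u = Strat.B)
        = N.filter (fun u => σ u = .AB) := by
      rw [Finset.filter_filter]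
      apply Finset.filter_congr
      intro u _
      cases h : σ u <;> simp [h]
    rw [hcongr, Finset.sum_congr rfl (fun u hu => by
      rw [(Finset.mem_filter.1 hu).2])]
    rw [Finset.sum_const, nsmul_eq_mul]
  rw [e1, e2, e3]
  ring

lemma totalPayoff_eq {G : SimpleGraph V} {Δ : ℕ} (hreg : IsRegular G Δ) (hΔ : 2 ≤ Δ)
    (q r : ℝ) (σ : V → Strat) (v : V) (s : Strat) :
    totalPayoff G q r σ v s =
      (cnt G σ v .A) * pairPayoff q r s .A + (cnt G σ v .B) * pairPayoff q r s .B +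
      (cnt G σ v .AB) * pairPayoff q r s .AB := by
  have hfin := nbr_finite hreg hΔ v
  rw [totalPayoff, ← hfin.coe_toFinset, finsum_mem_coe_finset,
    sum_strat _ σ (fun t => pairPayoff q r s t)]
  rw [cnt_eq_card hreg hΔ, cnt_eq_card hreg hΔ, cnt_eq_card hreg hΔ]

lemma cnt_sum {G : SimpleGraph V} {Δ : ℕ} (hreg : IsRegular G Δ) (hΔ : 2 ≤ Δ)
    (σ : V → Strat) (v : V) :
    cnt G σ v .A + cnt G σ v .B + cnt G σ v .AB = Δ := by
  classical
  rw [cnt_eq_card hreg hΔ, cnt_eq_card hreg hΔ, cnt_eq_card hreg hΔ]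
  set N := (nbr_finite hreg hΔ v).toFinset with hN
  have hcongr2 : (N.filter (fun u => ¬ σ u = Strat.A)).filter (fun u => σ u = Strat.B)
      = N.filter (fun u => σ u = .B) := by
    rw [Finset.filter_filter]
    apply Finset.filter_congr
    intro u _
    cases h : σ u <;> simp [h]
  have hcongr3 : (N.filter (fun u => ¬ σ u = Strat.A)).filter (fun u => ¬ σ u = Strat.B)
      = N.filter (fun u => σ u = .AB) := by
    rw [Finset.filter_filter]
    apply Finset.filter_congr
    intro u _
    cases h : σ u <;> simp [h]
  have h1 := Finset.card_filter_add_card_filter_not (s := N)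
    (p := fun u => σ u = Strat.A)
  have h2 := Finset.card_filter_add_card_filter_not
    (s := N.filter (fun u => ¬ σ u = Strat.A)) (p := fun u => σ u = Strat.B)
  rw [hcongr2, hcongr3] at h2
  have hcard : N.card = Δ := by
    rw [hN, ← Set.ncard_eq_toFinset_card _ (nbr_finite hreg hΔ v)]
    exact hreg v
  omega

end Aux
section BRlemmas
variable {V : Type*} {G : SimpleGraph V} {Δ : ℕ} {q r : ℝ} {σ : V → Strat} {v : V}

lemma isBR_A_regionI (hreg : IsRegular G Δ) (hΔ : 2 ≤ Δ) (hq0 : 0 < q) (hr0 : 0 < r)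
    (hqD : q * Δ ≤ 1) (hqr : q * (Δ - 1) ≤ r * Δ)
    (hc : cnt G σ v .AB = 0) (ha : 1 ≤ cnt G σ v .A) :
    IsBestResponse G q r σ v .A := by
  have hsum := cnt_sum hreg hΔ σ v
  have hΔR : (2:ℝ) ≤ (Δ:ℕ) := by exact_mod_cast hΔ
  have hsumR : (cnt G σ v .A : ℝ) + cnt G σ v .B + cnt G σ v .AB = Δ := by exact_mod_cast hsum
  have hcR : (cnt G σ v .AB : ℝ) = 0 := by exact_mod_cast hc
  have haR : (1:ℝ) ≤ (cnt G σ v .A : ℝ) := by exact_mod_cast ha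
  have hq2 : q ≤ 1/2 := by nlinarith
  have hM : max q (1 - q) = 1 - q := max_eq_right (by linarith)
  intro t
  rw [totalPayoff_eq hreg hΔ, totalPayoff_eq hreg hΔ]
  set a := (cnt G σ v .A : ℝ) with hadef; set b := (cnt G σ v .B : ℝ) with hbdef; set c := (cnt G σ v .AB : ℝ) with hcdef
  have ha0 : (0:ℝ) ≤ a := Nat.cast_nonneg _
  have hb0 : (0:ℝ) ≤ b := Nat.cast_nonneg _
  have hc0 : (0:ℝ) ≤ c := Nat.cast_nonneg _
  have hqsum : q * (a + b + c) = q * Δ := by rw [hsumR]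
  have hrsum : r * (a + b + c) = r * Δ := by rw [hsumR]
  have hqa : q * 1 ≤ q * a := mul_le_mul_of_nonneg_left haR hq0.le
  cases t <;> simp only [pairPayoff, hM] <;> nlinarith [hq0.le, hr0.le]

lemma isBR_A_regionII (hreg : IsRegular G Δ) (hΔ : 2 ≤ Δ) (hq0 : 0 < q) (hr0 : 0 < r)
    (h2 : 2 * q + r * Δ ≤ 1) (hb : q * (cnt G σ v .B) ≤ r * Δ)
    (hac : 1 ≤ cnt G σ v .A + cnt G σ v .AB) :
    IsBestResponse G q r σ v .A := by
  have hsum := cnt_sum hreg hΔ σ v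
  have hΔR : (2:ℝ) ≤ (Δ:ℕ) := by exact_mod_cast hΔ
  have hsumR : (cnt G σ v .A : ℝ) + cnt G σ v .B + cnt G σ v .AB = Δ := by exact_mod_cast hsum
  have hacR : (1:ℝ) ≤ (cnt G σ v .A : ℝ) + (cnt G σ v .AB : ℝ) := by exact_mod_cast hac
  have hq2 : q ≤ 1/2 := by nlinarith
  have hM : max q (1 - q) = 1 - q := max_eq_right (by linarith)
  intro t
  rw [totalPayoff_eq hreg hΔ, totalPayoff_eq hreg hΔ]
  set a := (cnt G σ v .A : ℝ) with hadef; set b := (cnt G σ v .B : ℝ) with hbdef; set c := (cnt G σ v .AB : ℝ) with hcdef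
  have ha0 : (0:ℝ) ≤ a := Nat.cast_nonneg _
  have hb0 : (0:ℝ) ≤ b := Nat.cast_nonneg _
  have hc0 : (0:ℝ) ≤ c := Nat.cast_nonneg _
  have hqsum : q * (a + b + c) = q * Δ := by rw [hsumR]
  have hrsum : r * (a + b + c) = r * Δ := by rw [hsumR]
  have hkey : (0:ℝ) ≤ (1 - 2*q) * (a + c - 1) := by
    apply mul_nonneg (by nlinarith [hr0.le]) (by linarith)
  cases t <;> simp only [pairPayoff, hM] <;> nlinarith [hq0.le, hr0.le, mul_nonneg hq0.le ha0]

lemma isBR_AB_regionII (hreg : IsRegular G Δ) (hΔ : 2 ≤ Δ) (hq0 : 0 < q) (hr0 : 0 < r)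
    (h2 : 2 * q + r * Δ ≤ 1) (hb : r * Δ ≤ q * (cnt G σ v .B))
    (hac : 1 ≤ cnt G σ v .A + cnt G σ v .AB) :
    IsBestResponse G q r σ v .AB := by
  have hsum := cnt_sum hreg hΔ σ v
  have hΔR : (2:ℝ) ≤ (Δ:ℕ) := by exact_mod_cast hΔ
  have hsumR : (cnt G σ v .A : ℝ) + cnt G σ v .B + cnt G σ v .AB = Δ := by exact_mod_cast hsum
  have hacR : (1:ℝ) ≤ (cnt G σ v .A : ℝ) + (cnt G σ v .AB : ℝ) := by exact_mod_cast hac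
  have hq2 : q ≤ 1/2 := by nlinarith
  have hM : max q (1 - q) = 1 - q := max_eq_right (by linarith)
  intro t
  rw [totalPayoff_eq hreg hΔ, totalPayoff_eq hreg hΔ]
  set a := (cnt G σ v .A : ℝ) with hadef; set b := (cnt G σ v .B : ℝ) with hbdef; set c := (cnt G σ v .AB : ℝ) with hcdef
  have ha0 : (0:ℝ) ≤ a := Nat.cast_nonneg _
  have hb0 : (0:ℝ) ≤ b := Nat.cast_nonneg _
  have hc0 : (0:ℝ) ≤ c := Nat.cast_nonneg _
  have hqsum : q * (a + b + c) = q * Δ := by rw [hsumR]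
  have hrsum : r * (a + b + c) = r * Δ := by rw [hsumR]
  have hkey : (0:ℝ) ≤ (1 - 2*q) * (a + c - 1) := by
    apply mul_nonneg (by nlinarith [hr0.le]) (by linarith)
  cases t <;> simp only [pairPayoff, hM] <;> nlinarith [hq0.le, hr0.le, mul_nonneg hq0.le ha0]

lemma regionI_BR_AB_imp_A (hreg : IsRegular G Δ) (hΔ : 2 ≤ Δ) (hq0 : 0 < q) (hr0 : 0 < r)
    (hqD : q * Δ ≤ 1) (hqr : q * (Δ - 1) ≤ r * Δ)
    (hc : cnt G σ v .AB = 0) (hAB : IsBestResponse G q r σ v .AB) :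
    IsBestResponse G q r σ v .A := by
  rcases Nat.eq_zero_or_pos (cnt G σ v .A) with ha | ha
  · exfalso
    have hsum := cnt_sum hreg hΔ σ v
    have hbΔ : cnt G σ v .B = Δ := by omega
    have hcontr := hAB .B
    rw [totalPayoff_eq hreg hΔ, totalPayoff_eq hreg hΔ] at hcontr
    have hΔR : (2:ℝ) ≤ (Δ:ℕ) := by exact_mod_cast hΔ
    have hbR : (cnt G σ v .B : ℝ) = Δ := by exact_mod_cast hbΔ
    have haR : (cnt G σ v .A : ℝ) = 0 := by exact_mod_cast ha
    have hcR : (cnt G σ v .AB : ℝ) = 0 := by exact_mod_cast hc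
    simp only [pairPayoff] at hcontr
    rw [haR, hbR, hcR] at hcontr
    nlinarith [mul_pos hr0 (show (0:ℝ) < (Δ:ℝ) by linarith)]
  · exact isBR_A_regionI hreg hΔ hq0 hr0 hqD hqr hc ha

noncomputable def chooseStrat (G : SimpleGraph V) (q r : ℝ) (σ : V → Strat) (v : V) : Strat :=
  open Classical in
  if IsBestResponse G q r σ v .A then .A
  else if IsBestResponse G q r σ v .AB then .AB else .B

lemma chooseStrat_isBR (G : SimpleGraph V) (q r : ℝ) (σ : V → Strat) (v : V) :
    IsBestResponse G q r σ v (chooseStrat G q r σ v) := by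
  classical
  rw [chooseStrat]
  split_ifs with h1 h2
  · exact h1
  · exact h2
  · obtain ⟨s, hs⟩ := exists_best (totalPayoff G q r σ v)
    have hB : IsBestResponse G q r σ v .B := by
      cases s with
      | A => exact absurd hs h1
      | AB => exact absurd hs h2
      | B => exact hs
    exact hB

lemma chooseStrat_eq_A (h : IsBestResponse G q r σ v .A) :
    chooseStrat G q r σ v = .A := by
  classical
  rw [chooseStrat, if_pos h]

lemma chooseStrat_ne_B (h : IsBestResponse G q r σ v .A ∨ IsBestResponse G q r σ v .AB) :
    chooseStrat G q r σ v ≠ .B := by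
  classical
  rw [chooseStrat]
  split_ifs with h1 h2 <;> simp_all

lemma chooseStrat_ne_AB (h : IsBestResponse G q r σ v .AB → IsBestResponse G q r σ v .A) :
    chooseStrat G q r σ v ≠ .AB := by
  classical
  rw [chooseStrat]
  split_ifs with h1 h2 <;> simp_all

end BRlemmas
section Run
variable {V : Type*}

open Classical in
noncomputable def runStrat (G : SimpleGraph V) (q r : ℝ) (σ0 : V → Strat) (α : ℕ → V) :
    ℕ → V → Strat
  | 0 => σ0
  | n + 1 => fun v =>
    if v = α n then chooseStrat G q r (runStrat G q r σ0 α n) (α n)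
    else runStrat G q r σ0 α n v

lemma runStrat_succ_self (G : SimpleGraph V) (q r : ℝ) (σ0 : V → Strat) (α : ℕ → V) (n : ℕ) :
    runStrat G q r σ0 α (n + 1) (α n) =
      chooseStrat G q r (runStrat G q r σ0 α n) (α n) := by
  rw [runStrat]
  exact if_pos rfl

lemma runStrat_succ_ne (G : SimpleGraph V) (q r : ℝ) (σ0 : V → Strat) (α : ℕ → V) (n : ℕ)
    {v : V} (h : v ≠ α n) :
    runStrat G q r σ0 α (n + 1) v = runStrat G q r σ0 α n v := by
  rw [runStrat]
  exact if_neg h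

lemma walk_closure {G : SimpleGraph V} {S : V → Prop}
    (hS : ∀ u v, G.Adj u v → S u → S v) :
    ∀ {u v : V}, G.Walk u v → S u → S v
  | _, _, SimpleGraph.Walk.nil, hu => hu
  | _, _, SimpleGraph.Walk.cons h p, hu => walk_closure hS p (hS _ _ h hu)

lemma nbr_nonempty {G : SimpleGraph V} {Δ : ℕ} (hreg : IsRegular G Δ) (hΔ : 2 ≤ Δ) (v : V) :
    (G.neighborSet v).Nonempty := by
  rw [← Set.ncard_pos (nbr_finite hreg hΔ v), hreg v]
  omega

lemma countable_of_connected {G : SimpleGraph V} {Δ : ℕ} (hreg : IsRegular G Δ) (hΔ : 2 ≤ Δ)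
    (hconn : G.Connected) : Countable V := by
  classical
  obtain ⟨z⟩ := hconn.nonempty
  have hem : ∀ v : V, ∃ fv : ℕ → V, G.neighborSet v ⊆ Set.range fv := by
    intro v
    obtain ⟨f, hf⟩ := ((nbr_finite hreg hΔ v).countable).exists_eq_range
      (nbr_nonempty hreg hΔ v)
    exact ⟨f, hf.le⟩
  choose nb hnb using hem
  let g : List ℕ → V := fun l => l.foldr (fun d v => nb v d) z
  have hsurj : Function.Surjective g := by
    intro v
    have hstep : ∀ u w : V, G.Adj u w → (∃ l, g l = u) → (∃ l, g l = w) := by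
      rintro u w hadj ⟨l, rfl⟩
      have hw : w ∈ Set.range (nb (g l)) := hnb (g l) hadj
      obtain ⟨d, hd⟩ := hw
      exact ⟨d :: l, hd⟩
    obtain ⟨p⟩ := hconn.preconnected z v
    exact walk_closure hstep p ⟨[], rfl⟩
  exact hsurj.countable

/-- helper: counting membership facts -/
lemma cnt_AB_zero {G : SimpleGraph V} (σ : V → Strat) (v : V)
    (h : ∀ u, σ u ≠ .AB) : cnt G σ v .AB = 0 := by
  rw [cnt]
  convert Set.ncard_empty V
  ext u
  simp only [Set.mem_inter_iff, Set.mem_setOf_eq, Set.mem_empty_iff_false, iff_false]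
  rintro ⟨-, hu⟩
  exact h u hu

lemma cnt_B_zero {G : SimpleGraph V} (σ : V → Strat) (v : V)
    (h : ∀ u ∈ G.neighborSet v, σ u ≠ .B) : cnt G σ v .B = 0 := by
  rw [cnt]
  convert Set.ncard_empty V
  ext u
  simp only [Set.mem_inter_iff, Set.mem_setOf_eq, Set.mem_empty_iff_false, iff_false]
  rintro ⟨h1, hu⟩
  exact h u h1 hu

lemma cnt_pos_of_mem {G : SimpleGraph V} {Δ : ℕ} (hreg : IsRegular G Δ) (hΔ : 2 ≤ Δ)
    {σ : V → Strat} {v u : V} {t : Strat} (hu : u ∈ G.neighborSet v) (ht : σ u = t) :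
    1 ≤ cnt G σ v t := by
  have hfin : (G.neighborSet v ∩ {w | σ w = t}).Finite :=
    (nbr_finite hreg hΔ v).inter_of_left _
  have : (G.neighborSet v ∩ {w | σ w = t}).Nonempty := ⟨u, hu, ht⟩
  exact (Set.ncard_pos hfin).2 this

lemma cnt_nonB_pos {G : SimpleGraph V} {Δ : ℕ} (hreg : IsRegular G Δ) (hΔ : 2 ≤ Δ)
    {σ : V → Strat} {v u : V} (hu : u ∈ G.neighborSet v) (ht : σ u ≠ .B) :
    1 ≤ cnt G σ v .A + cnt G σ v .AB := by
  cases h : σ u with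
  | A => have := cnt_pos_of_mem hreg hΔ hu h; omega
  | B => exact absurd h ht
  | AB => have := cnt_pos_of_mem hreg hΔ hu h; omega

end Run
section Construction
variable {V : Type*} {Δ : ℕ} {q r : ℝ}

lemma runStrat_zero {G : SimpleGraph V} (q r : ℝ) (σ0 : V → Strat) (α : ℕ → V) :
    runStrat G q r σ0 α 0 = σ0 := rfl

lemma epidemic_construction {G : SimpleGraph V} (hreg : IsRegular G Δ) (hΔ : 2 ≤ Δ)
    (hconn : G.Connected) (hinf : Infinite V) (hq0 : 0 < q) (hr0 : 0 < r)
    (hR : (q * Δ ≤ 1 ∧ q * ((Δ : ℝ) - 1) ≤ r * Δ) ∨ 2 * q + r * Δ ≤ 1) :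
    Epidemic G q r := by
  classical
  have hcnt : Countable V := countable_of_connected hreg hΔ hconn
  obtain ⟨dnm⟩ := nonempty_denumerable V
  let e : ℕ ≃ V := (Denumerable.eqv V).symm
  obtain ⟨z', hz'⟩ := nbr_nonempty hreg hΔ (e 0)
  set z : V := e 0 with hzdef
  set σ0 : V → Strat := fun v => if v = z ∨ v = z' then Strat.A else Strat.B with hσ0
  set α : ℕ → V := fun n => e (Nat.unpair n).1 with hαdef
  set σ : ℕ → V → Strat := runStrat G q r σ0 α with hσdef
  have hαsurj : Function.Surjective α := by
    intro v
    refine ⟨Nat.pair (e.symm v) 0, ?_⟩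
    simp [hαdef, Nat.unpair_pair]
  have hupdtimes : ∀ (v : V) (N : ℕ), ∃ n, N ≤ n ∧ α n = v := by
    intro v N
    refine ⟨Nat.pair (e.symm v) N, Nat.right_le_pair _ _, ?_⟩
    simp [hαdef, Nat.unpair_pair]
  have hchoose : ∀ n, σ (n + 1) (α n) = chooseStrat G q r (σ n) (α n) := fun n =>
    runStrat_succ_self G q r σ0 α n
  have hpres : ∀ n (v : V), v ≠ α n → σ (n + 1) v = σ n v := fun n v hv =>
    runStrat_succ_ne G q r σ0 α n hv
  have hne' : z ≠ z' := G.ne_of_adj hz'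
  have hz'z : z ∈ G.neighborSet z' := G.adj_symm hz'
  have hσ0z : σ0 z = Strat.A := if_pos (Or.inl rfl)
  have hσ0z' : σ0 z' = Strat.A := if_pos (Or.inr rfl)
  have hfinal : ∀ v : V, ∃ n, σ n v = Strat.A := by
    rcases hR with ⟨hqD, hqr⟩ | h2
    · -- region I
      have invAB : ∀ n (v : V), σ n v ≠ Strat.AB := by
        intro n
        induction n with
        | zero =>
          intro v
          show σ0 v ≠ Strat.AB
          rw [hσ0]
          dsimp only
          split <;> simp
        | succ n ih =>
          intro v
          by_cases hv : v = α n
          · rw [hv, hchoose n]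
            exact chooseStrat_ne_AB
              (regionI_BR_AB_imp_A hreg hΔ hq0 hr0 hqD hqr (cnt_AB_zero _ _ ih))
          · rw [hpres n v hv]
            exact ih v
      have invZ : ∀ n, σ n z = Strat.A ∧ σ n z' = Strat.A := by
        intro n
        induction n with
        | zero => exact ⟨hσ0z, hσ0z'⟩
        | succ n ih =>
          constructor
          · by_cases hv : z = α n
            · rw [hv, hchoose n]
              refine chooseStrat_eq_A (isBR_A_regionI hreg hΔ hq0 hr0 hqD hqr
                (cnt_AB_zero _ _ (invAB n)) (cnt_pos_of_mem hreg hΔ (hv ▸ hz') ih.2))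
            · rw [hpres n z hv]; exact ih.1
          · by_cases hv : z' = α n
            · rw [hv, hchoose n]
              refine chooseStrat_eq_A (isBR_A_regionI hreg hΔ hq0 hr0 hqD hqr
                (cnt_AB_zero _ _ (invAB n)) (cnt_pos_of_mem hreg hΔ (hv ▸ hz'z) ih.1))
            · rw [hpres n z' hv]; exact ih.2
      have stepE : ∀ u v : V, G.Adj u v →
          (∃ N, ∀ n, N ≤ n → σ n u = Strat.A) → (∃ N, ∀ n, N ≤ n → σ n v = Strat.A) := by
        rintro u v hadj ⟨Nu, hNu⟩
        obtain ⟨n₀, hn₀, hαn₀⟩ := hupdtimes v Nu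
        have hmem : u ∈ G.neighborSet v := hadj.symm
        refine ⟨n₀ + 1, ?_⟩
        intro m hm
        induction m with
        | zero => omega
        | succ m ih =>
          by_cases hm' : n₀ + 1 ≤ m
          · by_cases hv : v = α m
            · rw [hv, hchoose m]
              refine chooseStrat_eq_A (isBR_A_regionI hreg hΔ hq0 hr0 hqD hqr
                (cnt_AB_zero _ _ (invAB m))
                (cnt_pos_of_mem hreg hΔ (hv ▸ hmem) (hNu m (by omega))))
            · rw [hpres m v hv]; exact ih hm'
          · have hmn : m = n₀ := by omega
            subst hmn
            rw [← hαn₀, hchoose m]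
            refine chooseStrat_eq_A (isBR_A_regionI hreg hΔ hq0 hr0 hqD hqr
              (cnt_AB_zero _ _ (invAB m))
              (cnt_pos_of_mem hreg hΔ (hαn₀ ▸ hmem) (hNu m hn₀)))
      intro v
      obtain ⟨p⟩ := hconn.preconnected z v
      obtain ⟨N, hN⟩ := walk_closure stepE p ⟨0, fun n _ => (invZ n).1⟩
      exact ⟨N, hN N le_rfl⟩
    · -- region II
      have hBRor : ∀ (n : ℕ) (w u : V), u ∈ G.neighborSet w → σ n u ≠ Strat.B →
          IsBestResponse G q r (σ n) w Strat.A ∨ IsBestResponse G q r (σ n) w Strat.AB := by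
        intro n w u hu hnB
        have hac := cnt_nonB_pos hreg hΔ hu hnB
        rcases le_total (q * (cnt G (σ n) w Strat.B : ℝ)) (r * Δ) with hb | hb
        · exact Or.inl (isBR_A_regionII hreg hΔ hq0 hr0 h2 hb hac)
        · exact Or.inr (isBR_AB_regionII hreg hΔ hq0 hr0 h2 hb hac)
      have invZ : ∀ n, σ n z ≠ Strat.B ∧ σ n z' ≠ Strat.B := by
        intro n
        induction n with
        | zero => rw [show σ 0 = σ0 from rfl, hσ0z, hσ0z']; simp
        | succ n ih =>
          constructor
          · by_cases hv : z = α n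
            · rw [hv, hchoose n]
              exact chooseStrat_ne_B (hBRor n (α n) z' (hv ▸ hz') ih.2)
            · rw [hpres n z hv]; exact ih.1
          · by_cases hv : z' = α n
            · rw [hv, hchoose n]
              exact chooseStrat_ne_B (hBRor n (α n) z (hv ▸ hz'z) ih.1)
            · rw [hpres n z' hv]; exact ih.2
      have stepF : ∀ u v : V, G.Adj u v →
          (∃ N, ∀ n, N ≤ n → σ n u ≠ Strat.B) → (∃ N, ∀ n, N ≤ n → σ n v ≠ Strat.B) := by
        rintro u v hadj ⟨Nu, hNu⟩
        obtain ⟨n₀, hn₀, hαn₀⟩ := hupdtimes v Nu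
        have hmem : u ∈ G.neighborSet v := hadj.symm
        refine ⟨n₀ + 1, ?_⟩
        intro m hm
        induction m with
        | zero => omega
        | succ m ih =>
          by_cases hm' : n₀ + 1 ≤ m
          · by_cases hv : v = α m
            · rw [hv, hchoose m]
              exact chooseStrat_ne_B (hBRor m (α m) u (hv ▸ hmem) (hNu m (by omega)))
            · rw [hpres m v hv]; exact ih hm'
          · have hmn : m = n₀ := by omega
            subst hmn
            rw [← hαn₀, hchoose m]
            exact chooseStrat_ne_B (hBRor m (α m) u (hαn₀ ▸ hmem) (hNu m hn₀))
      have F : ∀ v : V, ∃ N, ∀ n, N ≤ n → σ n v ≠ Strat.B := by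
        intro v
        obtain ⟨p⟩ := hconn.preconnected z v
        exact walk_closure stepF p ⟨0, fun n _ => (invZ n).1⟩
      choose Nf hNf using F
      intro v
      set M : ℕ := ((nbr_finite hreg hΔ v).toFinset).sup Nf with hM
      have hallB : ∀ n, M ≤ n → cnt G (σ n) v Strat.B = 0 := by
        intro n hn
        refine cnt_B_zero _ _ (fun u hu hB => ?_)
        have : Nf u ≤ M := Finset.le_sup ((Set.Finite.mem_toFinset _).2 hu)
        exact hNf u n (le_trans this hn) hB
      obtain ⟨n₀, hn₀, hαn₀⟩ := hupdtimes v M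
      refine ⟨n₀ + 1, ?_⟩
      rw [← hαn₀, hchoose n₀]
      apply chooseStrat_eq_A
      apply isBR_A_regionII hreg hΔ hq0 hr0 h2
      · rw [hαn₀, hallB n₀ hn₀]
        have : (0:ℝ) ≤ r * Δ := by positivity
        simpa using this
      · have hsum := cnt_sum hreg hΔ (σ n₀) (α n₀)
        have hB0 : cnt G (σ n₀) (α n₀) Strat.B = 0 := by rw [hαn₀]; exact hallB n₀ hn₀
        omega
  refine ⟨{z, z'}, α, σ, ?_, hαsurj, ?_, ?_, ?_, ?_, hfinal⟩
  · exact (Set.finite_singleton z').insert z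
  · intro v hv
    show σ0 v = Strat.A
    rw [hσ0]
    rcases hv with hv | hv
    · exact if_pos (Or.inl hv)
    · exact if_pos (Or.inr hv)
  · intro v hv
    show σ0 v = Strat.B
    rw [hσ0]
    refine if_neg ?_
    rintro (h | h) <;> exact hv (by simp [h])
  · intro n
    rw [hchoose n]
    exact chooseStrat_isBR G q r (σ n) (α n)
  · exact fun n v hv => hpres n v hv

end Construction
section CopyLemmas
variable {V : Type*} {Δ : ℕ} {q r : ℝ}

lemma rt_adj_cons (Δ : ℕ) (a : Fin (Δ - 1)) (l : List (Fin (Δ - 1))) :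
    (RT Δ).Adj l (a :: l) := by
  rw [RT, SimpleGraph.fromRel_adj]
  refine ⟨?_, Or.inl ⟨a, rfl⟩⟩
  intro h
  have := congrArg List.length h
  simp at this

lemma copy_neighborSet {G : SimpleGraph V} (hreg : IsRegular G Δ) (hΔ : 2 ≤ Δ)
    {f : List (Fin (Δ - 1)) → V} (finj : Function.Injective f)
    (fhom : ∀ x y, (RT Δ).Adj x y → G.Adj (f x) (f y))
    (b : Fin (Δ - 1)) (t : List (Fin (Δ - 1))) :
    G.neighborSet (f (b :: t)) =
      insert (f t) (Set.range (fun a : Fin (Δ - 1) => f (a :: b :: t))) := by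
  have hsub : insert (f t) (Set.range (fun a : Fin (Δ - 1) => f (a :: b :: t)))
      ⊆ G.neighborSet (f (b :: t)) := by
    rintro x (rfl | ⟨a, rfl⟩)
    · exact (fhom _ _ (rt_adj_cons Δ b t)).symm
    · exact fhom _ _ (rt_adj_cons Δ a (b :: t))
  have hnotmem : f t ∉ Set.range (fun a : Fin (Δ - 1) => f (a :: b :: t)) := by
    rintro ⟨a, ha⟩
    have := congrArg List.length (finj ha)
    simp only [List.length_cons] at this
    omega
  have hrange : (Set.range (fun a : Fin (Δ - 1) => f (a :: b :: t))).ncard = Δ - 1 := by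
    have hinj : Function.Injective (fun a : Fin (Δ - 1) => f (a :: b :: t)) := by
      intro a a' h
      have := finj h
      simpa using this
    rw [← Nat.card_coe_set_eq, Nat.card_range_of_injective hinj, Nat.card_eq_fintype_card,
      Fintype.card_fin]
  have hfinr : (Set.range (fun a : Fin (Δ - 1) => f (a :: b :: t))).Finite :=
    Set.finite_range _
  have hcard : (G.neighborSet (f (b :: t))).ncard ≤
      (insert (f t) (Set.range (fun a : Fin (Δ - 1) => f (a :: b :: t)))).ncard := by
    rw [Set.ncard_insert_of_notMem hnotmem hfinr, hrange, hreg]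
    omega
  exact (Set.eq_of_subset_of_ncard_le hsub hcard (nbr_finite hreg hΔ _)).symm

lemma totalPayoff_copy {G : SimpleGraph V} (hreg : IsRegular G Δ) (hΔ : 2 ≤ Δ)
    {f : List (Fin (Δ - 1)) → V} (finj : Function.Injective f)
    (fhom : ∀ x y, (RT Δ).Adj x y → G.Adj (f x) (f y))
    (σ : V → Strat) (s : Strat) (b : Fin (Δ - 1)) (t : List (Fin (Δ - 1)))
    (hch : ∀ a : Fin (Δ - 1), σ (f (a :: b :: t)) = Strat.B) :
    totalPayoff G q r σ (f (b :: t)) s =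
      pairPayoff q r s (σ (f t)) + ((Δ : ℝ) - 1) * pairPayoff q r s Strat.B := by
  classical
  have hNS := copy_neighborSet hreg hΔ finj fhom b t
  have hfs : insert (f t) (Set.range (fun a : Fin (Δ - 1) => f (a :: b :: t)))
      = (↑(insert (f t) (Finset.univ.image (fun a : Fin (Δ - 1) => f (a :: b :: t)))) :
        Set V) := by
    rw [Finset.coe_insert, Finset.coe_image, Finset.coe_univ, Set.image_univ]
  have hnotmem : f t ∉ Finset.univ.image (fun a : Fin (Δ - 1) => f (a :: b :: t)) := by
    simp only [Finset.mem_image, Finset.mem_univ, true_and]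
    rintro ⟨a, ha⟩
    have := congrArg List.length (finj ha)
    simp only [List.length_cons] at this
    omega
  have hinj : ∀ a ∈ (Finset.univ : Finset (Fin (Δ - 1))),
      ∀ a' ∈ Finset.univ, f (a :: b :: t) = f (a' :: b :: t) → a = a' := by
    intro a _ a' _ h
    have := finj h
    simpa using this
  rw [totalPayoff, hNS, hfs, finsum_mem_coe_finset, Finset.sum_insert hnotmem,
    Finset.sum_image hinj]
  congr 1
  have : ∀ a : Fin (Δ - 1), pairPayoff q r s (σ (f (a :: b :: t))) = pairPayoff q r s .B :=
    fun a => by rw [hch a]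
  rw [Finset.sum_congr rfl (fun a _ => this a), Finset.sum_const, Finset.card_univ,
    Fintype.card_fin, nsmul_eq_mul, Nat.cast_sub (by omega), Nat.cast_one]

end CopyLemmas
section Blocking
variable {V : Type*} {Δ : ℕ} {q r : ℝ}

lemma forces_B {G : SimpleGraph V} {σ : V → Strat} {v : V} {s : Strat}
    (hs : IsBestResponse G q r σ v s)
    (hA : totalPayoff G q r σ v .A < totalPayoff G q r σ v .B)
    (hAB : totalPayoff G q r σ v .AB < totalPayoff G q r σ v .B) : s = Strat.B := by
  cases s with
  | A => exact absurd (hs .B) (by linarith)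
  | B => rfl
  | AB => exact absurd (hs .B) (by linarith)

lemma forces_ne_A {G : SimpleGraph V} {σ : V → Strat} {v : V} {s : Strat}
    (hs : IsBestResponse G q r σ v s)
    (h : totalPayoff G q r σ v .A < totalPayoff G q r σ v .AB) : s ≠ Strat.A := by
  intro hsA
  subst hsA
  exact absurd (hs .AB) (by linarith)

lemma no_epidemic {G : SimpleGraph V} (hreg : IsRegular G Δ) (hΔ : 2 ≤ Δ)
    (hcopy : HasRTCopy Δ G) (hq0 : 0 < q) (hr0 : 0 < r)
    (h2 : 1 < 2 * q + r * Δ)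
    (hOr : 1 < q * Δ ∨ r * Δ < q * ((Δ : ℝ) - 1)) :
    ¬ Epidemic G q r := by
  classical
  obtain ⟨f, finj, fhom⟩ := hcopy
  rintro ⟨S₀, α, σ, hS₀fin, hαsurj, h0A, h0B, hbr, hupd, hall⟩
  have hPfin : (f ⁻¹' S₀).Finite := hS₀fin.preimage finj.injOn
  obtain ⟨L, hL⟩ : ∃ L, ∀ l ∈ f ⁻¹' S₀, l.length ≤ L := by
    obtain ⟨b, hb⟩ := (hPfin.image List.length).bddAbove
    exact ⟨b, fun l hl => hb (Set.mem_image_of_mem _ hl)⟩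
  let a0 : Fin (Δ - 1) := ⟨0, by omega⟩
  set t₀ : List (Fin (Δ - 1)) := List.replicate L a0 with ht₀
  set l₀ : List (Fin (Δ - 1)) := a0 :: t₀ with hl₀
  have hlen : ∀ m : List (Fin (Δ - 1)), f (m ++ l₀) ∉ S₀ := by
    intro m hm
    have h1 : (m ++ l₀).length ≤ L := hL _ hm
    rw [List.length_append, hl₀, List.length_cons, ht₀, List.length_replicate] at h1
    omega
  have hΔR : (2 : ℝ) ≤ (Δ : ℕ) := by exact_mod_cast hΔ
  have hMq : (1 - q) ≤ max q (1 - q) := le_max_right _ _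
  have hqM : q ≤ max q (1 - q) := le_max_left _ _
  rcases lt_or_ge (r * Δ) (q * ((Δ : ℝ) - 1)) with hlt | hge
  · -- blocking structure ({f l₀}, descendants)
    have hq1Δ : 1 < q * ((Δ : ℝ) + 1) := by nlinarith
    have Inv : ∀ n, (∀ m : List (Fin (Δ - 1)), m ≠ [] → σ n (f (m ++ l₀)) = Strat.B) ∧
        σ n (f l₀) ≠ Strat.A := by
      intro n
      induction n with
      | zero =>
        refine ⟨fun m _ => h0B _ (hlen m), ?_⟩
        rw [h0B _ (by simpa using hlen [])]
        simp
      | succ n ih =>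
        constructor
        · intro m hm
          by_cases hv : f (m ++ l₀) = α n
          · obtain ⟨c, m', rfl⟩ : ∃ c m', m = c :: m' := by
              cases m with
              | nil => exact absurd rfl hm
              | cons c m' => exact ⟨c, m', rfl⟩
            have hch : ∀ a : Fin (Δ - 1), σ n (f (a :: c :: (m' ++ l₀))) = Strat.B := by
              intro a
              exact ih.1 (a :: c :: m') (by simp)
            have htp := fun s => totalPayoff_copy (q := q) (r := r) hreg hΔ finj fhom
              (σ n) s c (m' ++ l₀) hch
            have hpar : σ n (f (m' ++ l₀)) ≠ Strat.A := by
              cases m' with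
              | nil => simpa using ih.2
              | cons d m'' => rw [ih.1 (d :: m'') (by simp)]; simp
            have hmax : max q (1 - q) < q + r * (Δ : ℝ) := by
              apply max_lt <;> nlinarith
            have hBA : totalPayoff G q r (σ n) (f (c :: (m' ++ l₀))) Strat.A <
                totalPayoff G q r (σ n) (f (c :: (m' ++ l₀))) Strat.B := by
              rw [htp .A, htp .B]
              cases hsp : σ n (f (m' ++ l₀)) with
              | A => exact absurd hsp hpar
              | B => simp only [pairPayoff]; nlinarith
              | AB => simp only [pairPayoff]; nlinarith
            have hBAB : totalPayoff G q r (σ n) (f (c :: (m' ++ l₀))) Strat.AB <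
                totalPayoff G q r (σ n) (f (c :: (m' ++ l₀))) Strat.B := by
              rw [htp .AB, htp .B]
              cases hsp : σ n (f (m' ++ l₀)) with
              | A => exact absurd hsp hpar
              | B => simp only [pairPayoff]; nlinarith
              | AB => simp only [pairPayoff]; nlinarith
            rw [List.cons_append] at hv ⊢
            rw [hv] at hBA hBAB ⊢
            exact forces_B (hbr n) hBA hBAB
          · rw [hupd n _ hv]
            exact ih.1 m hm
        · by_cases hv : f l₀ = α n
          · have hch : ∀ a : Fin (Δ - 1), σ n (f (a :: a0 :: t₀)) = Strat.B := by
              intro a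
              exact ih.1 [a] (by simp)
            have htp := fun s => totalPayoff_copy (q := q) (r := r) hreg hΔ finj fhom
              (σ n) s a0 t₀ hch
            have hABA : totalPayoff G q r (σ n) (f (a0 :: t₀)) Strat.A <
                totalPayoff G q r (σ n) (f (a0 :: t₀)) Strat.AB := by
              rw [htp .A, htp .AB]
              cases hsp : σ n (f t₀) with
              | A => simp only [pairPayoff]; nlinarith
              | B => simp only [pairPayoff]; nlinarith
              | AB => simp only [pairPayoff]; nlinarith
            rw [hl₀] at hv
            rw [hl₀]
            rw [hv] at hABA ⊢
            exact forces_ne_A (hbr n) hABA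
          · rw [hupd n _ hv]
            exact ih.2
    obtain ⟨n, hn⟩ := hall (f ([a0] ++ l₀))
    have hB := (Inv n).1 [a0] (by simp)
    rw [hn] at hB
    exact Strat.noConfusion hB
  · -- blocking structure (∅, {f l₀} ∪ descendants)
    have hq1Δ : 1 < q * (Δ : ℝ) := by
      rcases hOr with h | h
      · exact h
      · linarith
    have hr1q : 1 - q < r * Δ := by nlinarith
    have Inv : ∀ n, ∀ m : List (Fin (Δ - 1)), σ n (f (m ++ l₀)) = Strat.B := by
      intro n
      induction n with
      | zero => exact fun m => h0B _ (hlen m)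
      | succ n ih =>
        intro m
        by_cases hv : f (m ++ l₀) = α n
        · have hmax : max q (1 - q) < q + r * (Δ : ℝ) := by
            apply max_lt <;> nlinarith
          cases m with
          | nil =>
            have hch : ∀ a : Fin (Δ - 1), σ n (f (a :: a0 :: t₀)) = Strat.B := by
              intro a
              exact ih [a]
            have htp := fun s => totalPayoff_copy (q := q) (r := r) hreg hΔ finj fhom
              (σ n) s a0 t₀ hch
            have hBA : totalPayoff G q r (σ n) (f (a0 :: t₀)) Strat.A <
                totalPayoff G q r (σ n) (f (a0 :: t₀)) Strat.B := by
              rw [htp .A, htp .B]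
              cases hsp : σ n (f t₀) with
              | A => simp only [pairPayoff]; nlinarith
              | B => simp only [pairPayoff]; nlinarith
              | AB => simp only [pairPayoff]; nlinarith
            have hBAB : totalPayoff G q r (σ n) (f (a0 :: t₀)) Strat.AB <
                totalPayoff G q r (σ n) (f (a0 :: t₀)) Strat.B := by
              rw [htp .AB, htp .B]
              cases hsp : σ n (f t₀) with
              | A => simp only [pairPayoff]; nlinarith
              | B => simp only [pairPayoff]; nlinarith
              | AB => simp only [pairPayoff]; nlinarith
            rw [List.nil_append, hl₀] at hv
            rw [List.nil_append, hl₀]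
            rw [hv] at hBA hBAB ⊢
            exact forces_B (hbr n) hBA hBAB
          | cons c m' =>
            have hch : ∀ a : Fin (Δ - 1), σ n (f (a :: c :: (m' ++ l₀))) = Strat.B := by
              intro a
              exact ih (a :: c :: m')
            have htp := fun s => totalPayoff_copy (q := q) (r := r) hreg hΔ finj fhom
              (σ n) s c (m' ++ l₀) hch
            have hparB : σ n (f (m' ++ l₀)) = Strat.B := ih m'
            have hBA : totalPayoff G q r (σ n) (f (c :: (m' ++ l₀))) Strat.A <
                totalPayoff G q r (σ n) (f (c :: (m' ++ l₀))) Strat.B := by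
              rw [htp .A, htp .B, hparB]
              simp only [pairPayoff]
              nlinarith
            have hBAB : totalPayoff G q r (σ n) (f (c :: (m' ++ l₀))) Strat.AB <
                totalPayoff G q r (σ n) (f (c :: (m' ++ l₀))) Strat.B := by
              rw [htp .AB, htp .B, hparB]
              simp only [pairPayoff]
              nlinarith
            rw [List.cons_append] at hv ⊢
            rw [hv] at hBA hBAB ⊢
            exact forces_B (hbr n) hBA hBAB
        · rw [hupd n _ hv]
          exact ih m
    obtain ⟨n, hn⟩ := hall (f l₀)
    have hB := Inv n []
    rw [List.nil_append, hn] at hB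
    exact Strat.noConfusion hB

end Blocking
section RTcopy
open SimpleGraph Walk in
lemma hasRTCopy_of_tree {W : Type*} {Δ : ℕ} {T : SimpleGraph W}
    (hreg : IsRegular T Δ) (hΔ : 2 ≤ Δ) (hconn : T.Connected) (hacyc : T.IsAcyclic) :
    HasRTCopy Δ T := by
  classical
  obtain ⟨z⟩ := hconn.nonempty
  obtain ⟨z', hzz'⟩ := nbr_nonempty hreg hΔ z
  -- choice of children avoiding the parent
  have child_exists : ∀ v p : W, p ∈ T.neighborSet v →
      ∃ c : Fin (Δ - 1) → W, Function.Injective c ∧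
        ∀ a, c a ∈ T.neighborSet v \ {p} := by
    intro v p hp
    have hfin : (T.neighborSet v \ {p}).Finite := (nbr_finite hreg hΔ v).diff
    have hcard : (T.neighborSet v \ {p}).ncard = Δ - 1 := by
      rw [Set.ncard_diff_singleton_of_mem hp, hreg v]
    have hcard' : Fintype.card hfin.toFinset = Δ - 1 := by
      rw [Fintype.card_coe, ← Set.ncard_eq_toFinset_card _ hfin]
      exact hcard
    let eqv := Fintype.equivFinOfCardEq hcard'
    refine ⟨fun a => ((eqv.symm a : hfin.toFinset) : W), ?_, ?_⟩
    · intro a a' h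
      have := Subtype.ext h
      exact eqv.symm.injective this
    · intro a
      exact hfin.mem_toFinset.1 (eqv.symm a).2
  choose! c hcinj hcmem using child_exists
  -- the embedding: fst = vertex, snd = parent
  set g : List (Fin (Δ - 1)) → W × W :=
    fun l => l.foldr (fun a st => (c st.1 st.2 a, st.1)) (z, z') with hg
  have hgcons : ∀ (a : Fin (Δ - 1)) (l : List (Fin (Δ - 1))),
      g (a :: l) = (c (g l).1 (g l).2 a, (g l).1) := fun a l => rfl
  have hadjinv : ∀ l : List (Fin (Δ - 1)), (g l).2 ∈ T.neighborSet (g l).1 := by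
    intro l
    induction l with
    | nil => exact hzz'
    | cons a l ih =>
      have hmem := (hcmem (g l).1 (g l).2 ih a).1
      have hadj : T.Adj (g l).1 (c (g l).1 (g l).2 a) := hmem
      exact hadj.symm
  have hchildmem : ∀ (l : List (Fin (Δ - 1))) (a : Fin (Δ - 1)),
      (g (a :: l)).1 ∈ T.neighborSet (g l).1 \ {(g l).2} :=
    fun l a => hcmem (g l).1 (g l).2 (hadjinv l) a
  have hstep : ∀ (a : Fin (Δ - 1)) (l : List (Fin (Δ - 1))),
      T.Adj ((g (a :: l)).1) ((g l).1) := by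
    intro a l
    exact ((hchildmem l a).1 : T.Adj (g l).1 _).symm
  -- the canonical walks to z'
  let Wb : ∀ l : List (Fin (Δ - 1)), T.Walk ((g l).1) z' := fun l =>
    List.rec (motive := fun l => T.Walk ((g l).1) z')
      (Walk.cons hzz' Walk.nil)
      (fun a l ih => Walk.cons (hstep a l) ih) l
  have hWbcons : ∀ (a : Fin (Δ - 1)) (l : List (Fin (Δ - 1))),
      Wb (a :: l) = Walk.cons (hstep a l) (Wb l) := fun a l => rfl
  have hWbnil : Wb [] = Walk.cons hzz' Walk.nil := rfl
  have hWblen : ∀ l : List (Fin (Δ - 1)), (Wb l).length = l.length + 1 := by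
    intro l
    induction l with
    | nil => rfl
    | cons a l ih => rw [hWbcons, Walk.length_cons, ih]; rfl
  have hWbsnd : ∀ (a : Fin (Δ - 1)) (l : List (Fin (Δ - 1))),
      (Wb (a :: l)).getVert 1 = (g l).1 := by
    intro a l
    rw [hWbcons]
    rw [Walk.getVert_cons _ _ one_ne_zero, Nat.sub_self, Walk.getVert_zero]
  have hWbpath : ∀ l : List (Fin (Δ - 1)), (Wb l).IsPath := by
    intro l
    induction l with
    | nil =>
      refine Walk.IsPath.nil.cons ?_
      simp only [Walk.support_nil, List.mem_singleton]
      exact T.ne_of_adj hzz'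
    | cons a l ih =>
      rw [hWbcons]
      refine ih.cons ?_
      intro hmem
      have hxne1 : (g (a :: l)).1 ≠ (g l).1 := T.ne_of_adj (hstep a l)
      have hxne2 : (g (a :: l)).1 ≠ (g l).2 := by
        intro hh
        exact (hchildmem l a).2 (by rw [hh]; exact Set.mem_singleton _)
      cases l with
      | nil =>
        rw [hWbnil] at hmem
        change (g [a]).1 ∈ [z, z'] at hmem
        simp only [Walk.support_cons, Walk.support_nil, List.mem_cons,
          List.not_mem_nil, or_false] at hmem
        rcases hmem with h | h
        · exact hxne1 h
        · exact hxne2 h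
      | cons b t =>
        have p1path : ((Wb (b :: t)).dropUntil _ hmem).IsPath := ih.dropUntil hmem
        have hglnot : (g (b :: t)).1 ∉ ((Wb (b :: t)).dropUntil _ hmem).support := by
          intro hgl
          have hsplit := Walk.take_spec (Wb (b :: t)) hmem
          have hsup : (Wb (b :: t)).support =
              ((Wb (b :: t)).takeUntil _ hmem).support ++
                ((Wb (b :: t)).dropUntil _ hmem).support.tail := by
            rw [← Walk.support_append, hsplit]
          have hnodup := ih.support_nodup
          rw [hsup] at hnodup
          have hdisj := List.disjoint_of_nodup_append hnodup
          have h1 : (g (b :: t)).1 ∈ ((Wb (b :: t)).takeUntil _ hmem).support :=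
            Walk.start_mem_support _
          rw [Walk.support_eq_cons] at hgl
          rcases List.mem_cons.1 hgl with hgl | hgl
          · exact hxne1 hgl.symm
          · exact hdisj h1 hgl
        have qpath : (Walk.cons (hstep a (b :: t)).symm
            ((Wb (b :: t)).dropUntil _ hmem)).IsPath := p1path.cons hglnot
        have hequal : Wb (b :: t) = Walk.cons (hstep a (b :: t)).symm
            ((Wb (b :: t)).dropUntil _ hmem) := by
          have := hacyc.path_unique ⟨Wb (b :: t), ih⟩ ⟨_, qpath⟩
          exact congrArg Subtype.val this
        have hsnd : (Wb (b :: t)).getVert 1 =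
            (Walk.cons (hstep a (b :: t)).symm
              ((Wb (b :: t)).dropUntil _ hmem)).getVert 1 :=
          congrArg (fun w => SimpleGraph.Walk.getVert w 1) hequal
        rw [hWbsnd b t, Walk.getVert_cons _ _ one_ne_zero, Nat.sub_self, Walk.getVert_zero] at hsnd
        exact hxne2 (hsnd.symm.trans (congrArg Prod.snd (hgcons b t)).symm)
  -- injectivity
  have hinj : Function.Injective (fun l => (g l).1) := by
    intro l l' h
    simp only at h
    induction l generalizing l' with
    | nil =>
      cases l' with
      | nil => rfl
      | cons a' t' =>
        exfalso
        have hW := hacyc.path_unique ⟨Wb [], hWbpath []⟩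
          ⟨(Wb (a' :: t')).copy h.symm rfl, (Walk.isPath_copy _ _ _).2 (hWbpath (a' :: t'))⟩
        have hWeq : Wb [] = (Wb (a' :: t')).copy h.symm rfl := congrArg Subtype.val hW
        have hlen : (Wb []).length = ((Wb (a' :: t')).copy h.symm rfl).length :=
          congrArg SimpleGraph.Walk.length hWeq
        rw [Walk.length_copy] at hlen
        rw [hWblen [], hWblen (a' :: t')] at hlen
        simp at hlen
    | cons a t ih =>
      cases l' with
      | nil =>
        exfalso
        have hW := hacyc.path_unique ⟨Wb (a :: t), hWbpath (a :: t)⟩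
          ⟨(Wb []).copy h.symm rfl, (Walk.isPath_copy _ _ _).2 (hWbpath [])⟩
        have hWeq : Wb (a :: t) = (Wb []).copy h.symm rfl := congrArg Subtype.val hW
        have hlen : (Wb (a :: t)).length = ((Wb []).copy h.symm rfl).length :=
          congrArg SimpleGraph.Walk.length hWeq
        rw [Walk.length_copy] at hlen
        rw [hWblen (a :: t), hWblen []] at hlen
        simp at hlen
      | cons a' t' =>
        have hW := hacyc.path_unique ⟨Wb (a :: t), hWbpath (a :: t)⟩
          ⟨(Wb (a' :: t')).copy h.symm rfl, (Walk.isPath_copy _ _ _).2 (hWbpath (a' :: t'))⟩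
        have hWeq : Wb (a :: t) = (Wb (a' :: t')).copy h.symm rfl := congrArg Subtype.val hW
        have hsnd : (Wb (a :: t)).getVert 1 = ((Wb (a' :: t')).copy h.symm rfl).getVert 1 :=
          congrArg (fun w => SimpleGraph.Walk.getVert w 1) hWeq
        rw [Walk.getVert_copy, hWbsnd, hWbsnd] at hsnd
        have ht : t = t' := ih hsnd
        subst ht
        have : c (g t).1 (g t).2 a = c (g t).1 (g t).2 a' := by
          have h1 := h
          rw [hgcons, hgcons] at h1
          exact h1
        rw [hcinj (g t).1 (g t).2 (hadjinv t) this]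
  refine ⟨fun l => (g l).1, hinj, ?_⟩
  rintro x y hxy
  rw [RT, SimpleGraph.fromRel_adj] at hxy
  obtain ⟨hne, h | h⟩ := hxy
  · obtain ⟨a, rfl⟩ := h
    exact (hchildmem x a).1
  · obtain ⟨a, rfl⟩ := h
    exact ((hchildmem y a).1 : T.Adj (g y).1 _).symm
end RTcopy
section Main

lemma epidemic_iff_region {V : Type*} {Δ : ℕ} {q r : ℝ} {G : SimpleGraph V}
    (hreg : IsRegular G Δ) (hΔ : 2 ≤ Δ) (hconn : G.Connected) (hinf : Infinite V)
    (hcopy : HasRTCopy Δ G) (hq0 : 0 < q) (hr0 : 0 < r) :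
    Epidemic G q r ↔
      ((q * Δ ≤ 1 ∧ q * ((Δ : ℝ) - 1) ≤ r * Δ) ∨ 2 * q + r * Δ ≤ 1) := by
  constructor
  · intro hepi
    by_contra hR
    push_neg at hR
    obtain ⟨h1, h2⟩ := hR
    refine no_epidemic hreg hΔ hcopy hq0 hr0 (by linarith) ?_ hepi
    by_cases hq : q * Δ ≤ 1
    · exact Or.inr (h1 hq)
    · exact Or.inl (lt_of_not_ge hq)
  · exact epidemic_construction hreg hΔ hconn hinf hq0 hr0

end Main
/-- If a connected infinite `Δ`-regular graph `G` contains a subgraph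
isomorphic to `RT_Δ`, then its epidemic region equals that of the infinite
`Δ`-regular tree `T_Δ`. -/
theorem region_eq_tree_of_hasRTCopy {V W : Type*} (Δ : ℕ) (hΔ : 2 ≤ Δ)
    (G : SimpleGraph V) (hGInf : Infinite V) (hGConn : G.Connected) (hGReg : IsRegular G Δ)
    (hcopy : HasRTCopy Δ G)
    (T : SimpleGraph W) (hTInf : Infinite W) (hTConn : T.Connected)
    (hTAcyc : T.IsAcyclic) (hTReg : IsRegular T Δ) :
    epidemicRegion G = epidemicRegion T := by
  have hTcopy : HasRTCopy Δ T := hasRTCopy_of_tree hTReg hΔ hTConn hTAcyc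
  ext p
  simp only [epidemicRegion, Set.mem_setOf_eq]
  constructor
  · rintro ⟨hq0, hq1, hr0, hepi⟩
    refine ⟨hq0, hq1, hr0, ?_⟩
    rw [epidemic_iff_region hTReg hΔ hTConn hTInf hTcopy hq0 hr0]
    rw [← epidemic_iff_region hGReg hΔ hGConn hGInf hcopy hq0 hr0]
    exact hepi
  · rintro ⟨hq0, hq1, hr0, hepi⟩
    refine ⟨hq0, hq1, hr0, ?_⟩
    rw [epidemic_iff_region hGReg hΔ hGConn hGInf hcopy hq0 hr0]
    rw [← epidemic_iff_region hTReg hΔ hTConn hTInf hTcopy hq0 hr0]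
    exact hepi

end Contagion
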